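/- Let n ≥ 4 and set u_max(n) = 2^{⌊log₂(n−2)⌋+2} − n. Then (i) every factor w of the Thue–Morse word t of length n uniquely determines at most u_max(n) letters: for all natural numbers ℓ₁, ℓ₂ with ℓ₁ + ℓ₂ > u_max(n) there exist two distinct pairs (v₁, v₂) ≠ (y₁, y₂) of binary words with |v₁| = |y₁| = ℓ₁ and |v₂| = |y₂| = ℓ₂ such that both v₁ w v₂ and y₁ w y₂ are factors of t; and (ii) the bound is sharp: there exist a factor w of t of length n and natural numbers ℓ₁, ℓ₂ with ℓ₁ + ℓ₂ = u_max(n) such that exactly one pair of binary words (v₁, v₂) with |v₁| = ℓ₁ and |v₂| = ℓ₂ makes v₁ w v₂ a factor of t. -/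

import Mathlib

/-- The Thue–Morse sequence: sum of binary digits of `n`, mod 2. -/
def tm (n : ℕ) : Fin 2 := Fin.ofNat 2 (Nat.digits 2 n).sum

/-- The factor of the Thue–Morse word of length `n` starting at position `i`. -/
def tmWord (i n : ℕ) : List (Fin 2) := (List.range n).map (fun j => tm (i + j))

/-- A binary word is a factor of the Thue–Morse word. -/
def IsFactor (w : List (Fin 2)) : Prop := ∃ i : ℕ, w = tmWord i w.length

/-- Number of occurrences of the word `x` as a factor of `u`. -/
def occCount (u x : List (Fin 2)) : ℕ :=
  ((List.range u.length).filter (fun i => (u.drop i).take x.length = x)).length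

/-- Two binary words (of equal length) are 2-abelian equivalent: same first letter,
same last letter, and the same number of occurrences of every word of length 2. -/
def TwoAbelianEquiv (u v : List (Fin 2)) : Prop :=
  u.length = v.length ∧ u.take 1 = v.take 1 ∧
  u.drop (u.length - 1) = v.drop (v.length - 1) ∧
  ∀ x : List (Fin 2), x.length = 2 → occCount u x = occCount v x

/-- `P n` is the 2-abelian complexity of the Thue–Morse word: the number of
2-abelian equivalence classes of factors of length `n`. -/
noncomputable def P (n : ℕ) : ℕ :=
  Nat.card (Quot (fun u v : {w : List (Fin 2) // w.length = n ∧ IsFactor w} =>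
    TwoAbelianEquiv u.1 v.1))

/-- `pword w` counts the pairs in `w`: the total number of occurrences of `00` and `11`. -/
def pword (w : List (Fin 2)) : ℕ := occCount w [0, 0] + occCount w [1, 1]

/-- The set of possible pair counts of Thue–Morse factors of length `n`. -/
def pairs (n : ℕ) : Set ℕ :=
  { m | ∃ w : List (Fin 2), w.length = n ∧ IsFactor w ∧ pword w = m }

/-- The set of possible pair counts of Thue–Morse factors of length `n`
occurring at some odd position (pure odd factors). -/
def PAIRS (n : ℕ) : Set ℕ := { m | ∃ i : ℕ, i % 2 = 1 ∧ pword (tmWord i n) = m }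

set_option maxHeartbeats 1000000


/- ### Fin 2 arithmetic facts -/
lemma f2_succ_ne : ∀ x : Fin 2, x + 1 ≠ x := by decide
lemma f2_neq : ∀ x : Fin 2, x ≠ x + 1 := by decide
lemma f2_ne_iff : ∀ x y : Fin 2, x ≠ y → y = x + 1 := by decide
lemma f2_two : ∀ x : Fin 2, x + 1 + 1 = x := by decide
lemma f2_cancel : ∀ x y : Fin 2, x + 1 = y + 1 → x = y := by decide
lemma f2_add_ne : ∀ x y : Fin 2, x ≠ y → x + 1 ≠ y + 1 := by decide
lemma f2_absurd : ∀ x y : Fin 2, x = y → x = y + 1 → False := by decide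

/- ### basic recurrences for tm -/
lemma tm_zero : tm 0 = 0 := by simp [tm]

lemma tm_even (j : ℕ) : tm (2 * j) = tm j := by
  rcases Nat.eq_zero_or_pos j with h | h
  · simp [h]
  · have hd : Nat.digits 2 (2 * j) = (2 * j) % 2 :: Nat.digits 2 ((2 * j) / 2) :=
      Nat.digits_def' (by norm_num) (by omega)
    have h1 : (2 * j) % 2 = 0 := by omega
    have h2 : (2 * j) / 2 = j := by omega
    rw [tm, tm, hd, h1, h2, List.sum_cons, Nat.zero_add]

lemma tm_odd (j : ℕ) : tm (2 * j + 1) = tm j + 1 := by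
  have hd : Nat.digits 2 (2 * j + 1) = (2 * j + 1) % 2 :: Nat.digits 2 ((2 * j + 1) / 2) :=
    Nat.digits_def' (by norm_num) (by omega)
  have h1 : (2 * j + 1) % 2 = 1 := by omega
  have h2 : (2 * j + 1) / 2 = j := by omega
  rw [tm, tm, hd, h1, h2, List.sum_cons]
  ext; simp [Fin.val_add]; omega

lemma tm1 : tm 1 = 1 := by simpa [tm_zero] using tm_odd 0
lemma tm2 : tm 2 = 1 := by simpa [tm1] using tm_even 1
lemma tm3 : tm 3 = 0 := by have := tm_odd 1; rw [tm1] at this; simpa using this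
lemma tm4 : tm 4 = 1 := by simpa [tm2] using tm_even 2
lemma tm5 : tm 5 = 0 := by have := tm_odd 2; rw [tm2] at this; simpa using this
lemma tm6 : tm 6 = 0 := by simpa [tm3] using tm_even 3
lemma tm7 : tm 7 = 1 := by have := tm_odd 3; rw [tm3] at this; simpa using this

/- ### splitting: tm (q * 2^p + r) = tm q + tm r for r < 2^p -/
lemma tm_split : ∀ p q r : ℕ, r < 2 ^ p → tm (q * 2 ^ p + r) = tm q + tm r := by
  intro p
  induction p with
  | zero => intro q r hr; interval_cases r; simp [tm_zero]
  | succ p IH =>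
    intro q r hr
    have hP : (2:ℕ) ^ (p + 1) = 2 ^ p * 2 := pow_succ 2 p
    rcases Nat.even_or_odd r with hr' | hr'
    · obtain ⟨r', hrr⟩ := hr'
      have h1 : q * 2 ^ (p+1) + r = 2 * (q * 2 ^ p + r') := by rw [hP, hrr]; ring
      have hb : r' < 2 ^ p := by rw [hP] at hr; omega
      rw [h1, tm_even, IH q r' hb, show r = 2 * r' from by omega, tm_even]
    · obtain ⟨r', hrr⟩ := hr'
      have h1 : q * 2 ^ (p+1) + r = 2 * (q * 2 ^ p + r') + 1 := by rw [hP, hrr]; ring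
      have hb : r' < 2 ^ p := by rw [hP] at hr; omega
      rw [h1, tm_odd, IH q r' hb, hrr, tm_odd, add_assoc]

/- ### every finite window recurs arbitrarily far to the right -/
lemma tm_shift (i len N : ℕ) : ∃ j, N ≤ j ∧ ∀ s < len, tm (j + s) = tm (i + s) := by
  set q := max (i + len) N with hq
  have hlt : i + len < 2 ^ q := lt_of_le_of_lt (le_max_left _ _) (Nat.lt_two_pow_self (n := q))
  refine ⟨i + 3 * 2 ^ q, ?_, ?_⟩
  · have : N ≤ 2 ^ q := le_of_lt (lt_of_le_of_lt (le_max_right _ _) (Nat.lt_two_pow_self (n := q)))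
    omega
  · intro s hs
    have h1 : i + 3 * 2 ^ q + s = 3 * 2 ^ q + (i + s) := by omega
    rw [h1, tm_split q 3 (i + s) (by omega), tm3, zero_add]

/- ### adjacency facts -/
lemma tm_adj {j : ℕ} (h : tm j = tm (j + 1)) : j % 2 = 1 := by
  by_contra hodd
  obtain ⟨m, hm⟩ : ∃ m, j = 2 * m := ⟨j / 2, by omega⟩
  rw [hm, show 2 * m + 1 = 2 * m + 1 from rfl, tm_even, tm_odd] at h
  exact f2_succ_ne _ h.symm

lemma tm_no_triple (e : ℕ) (h1 : tm e = tm (e + 1)) (h2 : tm (e + 1) = tm (e + 2)) : False := by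
  have a1 := tm_adj h1
  have a2 := tm_adj (j := e + 1) (by rw [h2])
  omega

lemma tm_pair_next {g : ℕ} (h : tm g = tm (g + 1)) : tm (g + 2) = tm (g + 1) + 1 := by
  have hg := tm_adj h
  obtain ⟨m, hm⟩ : ∃ m, g + 1 = 2 * m := ⟨(g + 1) / 2, by omega⟩
  have h2 : g + 2 = 2 * m + 1 := by omega
  rw [h2, tm_odd, hm, tm_even]

/- ### parity recognizability for length-4 windows -/
lemma parity4_aux (e1 e2 : ℕ) (h : ∀ s < 4, tm (2 * e1 + s) = tm (2 * e2 + 1 + s)) : False := by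
  have h0 := h 0 (by norm_num)
  have h1 := h 1 (by norm_num)
  have h2 := h 2 (by norm_num)
  have h3 := h 3 (by norm_num)
  rw [Nat.add_zero, tm_even, Nat.add_zero, tm_odd] at h0
  rw [tm_odd, show 2 * e2 + 1 + 1 = 2 * (e2 + 1) from by ring, tm_even] at h1
  rw [show 2 * e1 + 2 = 2 * (e1 + 1) from by ring, tm_even,
      show 2 * e2 + 1 + 2 = 2 * (e2 + 1) + 1 from by ring, tm_odd] at h2
  rw [show 2 * e1 + 3 = 2 * (e1 + 1) + 1 from by ring, tm_odd,
      show 2 * e2 + 1 + 3 = 2 * (e2 + 2) from by ring, tm_even] at h3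
  -- h0 : tm e1 = tm e2 + 1 ; h1 : tm e1 + 1 = tm (e2+1)
  -- h2 : tm (e1+1) = tm (e2+1) + 1 ; h3 : tm (e1+1) + 1 = tm (e2+2)
  have k1 : tm (e1 + 1) = tm e1 := by
    calc tm (e1 + 1) = tm (e2 + 1) + 1 := h2
    _ = tm e1 + 1 + 1 := by rw [h1]
    _ = tm e1 := f2_two _
  have k2 : tm (e2 + 1) = tm (e2 + 2) := by
    calc tm (e2 + 1) = tm e1 + 1 := h1.symm
    _ = tm (e1 + 1) + 1 := by rw [k1]
    _ = tm (e2 + 2) := h3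
  have o1 : e1 % 2 = 1 := tm_adj k1.symm
  have o2 : (e2 + 1) % 2 = 1 := tm_adj k2
  obtain ⟨f, hf⟩ : ∃ f, e1 = 2 * f + 1 := ⟨e1 / 2, by omega⟩
  obtain ⟨g, hg⟩ : ∃ g, e2 = 2 * g := ⟨e2 / 2, by omega⟩
  have hf1 : tm e1 = tm f + 1 := by rw [hf, tm_odd]
  have hg1 : tm e2 = tm g := by rw [hg, tm_even]
  have hg2 : tm (e2 + 1) = tm g + 1 := by rw [hg, tm_odd]
  have q1 : tm f = tm g := by
    apply f2_cancel
    rw [← hf1, ← hg1, ← h0]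
  have q2 : tm f = tm g + 1 := by
    have : tm f + 1 + 1 = tm g + 1 := by rw [← hf1, ← hg2, ← h1]
    rw [f2_two] at this
    exact this
  exact f2_absurd _ _ q1 q2

lemma parity4 {j1 j2 : ℕ} (h : ∀ s < 4, tm (j1 + s) = tm (j2 + s)) : j1 % 2 = j2 % 2 := by
  rcases Nat.even_or_odd j1 with h1 | h1 <;> rcases Nat.even_or_odd j2 with h2 | h2 <;>
    [skip; skip; skip; skip]
  · rw [Nat.even_iff] at h1 h2; omega
  · exfalso
    rw [Nat.even_iff] at h1; rw [Nat.odd_iff] at h2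
    obtain ⟨e1, he1⟩ : ∃ e, j1 = 2 * e := ⟨j1 / 2, by omega⟩
    obtain ⟨e2, he2⟩ : ∃ e, j2 = 2 * e + 1 := ⟨j2 / 2, by omega⟩
    exact parity4_aux e1 e2 (by rw [← he1, ← he2]; exact h)
  · exfalso
    rw [Nat.odd_iff] at h1; rw [Nat.even_iff] at h2
    obtain ⟨e1, he1⟩ : ∃ e, j2 = 2 * e := ⟨j2 / 2, by omega⟩
    obtain ⟨e2, he2⟩ : ∃ e, j1 = 2 * e + 1 := ⟨j1 / 2, by omega⟩
    exact parity4_aux e1 e2 (by rw [← he1, ← he2]; intro s hs; exact (h s hs).symm)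
  · rw [Nat.odd_iff] at h1 h2; omega

/- ### up/down transfer of window equalities -/
lemma down_eq {x y m : ℕ} (h : ∀ u < m, tm (x + u) = tm (y + u)) :
    ∀ v < 2 * m, tm (2 * x + v) = tm (2 * y + v) := by
  intro v hv
  rcases Nat.even_or_odd v with hv' | hv'
  · have hv2 : v % 2 = 0 := Nat.even_iff.mp hv'
    obtain ⟨u, hu⟩ : ∃ u, v = 2 * u := ⟨v / 2, by omega⟩
    have e1 : 2 * x + v = 2 * (x + u) := by omega
    have e2 : 2 * y + v = 2 * (y + u) := by omega
    rw [e1, e2, tm_even, tm_even, h u (by omega)]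
  · have hv2 : v % 2 = 1 := Nat.odd_iff.mp hv'
    obtain ⟨u, hu⟩ : ∃ u, v = 2 * u + 1 := ⟨v / 2, by omega⟩
    have e1 : 2 * x + v = 2 * (x + u) + 1 := by omega
    have e2 : 2 * y + v = 2 * (y + u) + 1 := by omega
    rw [e1, e2, tm_odd, tm_odd, h u (by omega)]

lemma up_eq {x y n : ℕ} (hn : 1 ≤ n) (hpar : x % 2 = y % 2) (h : ∀ s < n, tm (x + s) = tm (y + s)) :
    ∀ u < (n + 1 + x % 2) / 2, tm (x / 2 + u) = tm (y / 2 + u) := by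
  intro u hu
  rcases Nat.even_or_odd x with hx | hx
  · have hd : x % 2 = 0 := Nat.even_iff.mp hx
    have e1 : x + 2 * u = 2 * (x / 2 + u) := by omega
    have e2 : y + 2 * u = 2 * (y / 2 + u) := by omega
    have hh := h (2 * u) (by omega)
    rw [e1, e2, tm_even, tm_even] at hh
    exact hh
  · have hd : x % 2 = 1 := Nat.odd_iff.mp hx
    rcases Nat.eq_zero_or_pos u with rfl | hu0
    · have e1 : x = 2 * (x / 2) + 1 := by omega
      have e2 : y = 2 * (y / 2) + 1 := by omega
      have hh := h 0 (by omega)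
      rw [Nat.add_zero, Nat.add_zero] at hh
      rw [e1, e2, tm_odd, tm_odd] at hh
      simpa using f2_cancel _ _ hh
    · have e1 : x + (2 * u - 1) = 2 * (x / 2 + u) := by omega
      have e2 : y + (2 * u - 1) = 2 * (y / 2 + u) := by omega
      have hh := h (2 * u - 1) (by omega)
      rw [e1, e2, tm_even, tm_even] at hh
      exact hh

/- ### existence of all six nonconstant triples, arbitrarily far out -/
lemma tm_triple (a b c : Fin 2) (h : ¬(a = b ∧ b = c)) (N : ℕ) :
    ∃ g, N ≤ g ∧ tm g = a ∧ tm (g + 1) = b ∧ tm (g + 2) = c := by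
  have key : ∃ g0, tm g0 = a ∧ tm (g0 + 1) = b ∧ tm (g0 + 2) = c := by
    fin_cases a <;> fin_cases b <;> fin_cases c
    · exact absurd ⟨rfl, rfl⟩ h
    · exact ⟨5, tm5, tm6, tm7⟩
    · exact ⟨3, tm3, tm4, tm5⟩
    · exact ⟨0, tm_zero, tm1, tm2⟩
    · exact ⟨4, tm4, tm5, tm6⟩
    · exact ⟨2, tm2, tm3, tm4⟩
    · exact ⟨1, tm1, tm2, tm3⟩
    · exact absurd ⟨rfl, rfl⟩ h
  obtain ⟨g0, h0, h1, h2⟩ := key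
  obtain ⟨j, hjN, hj⟩ := tm_shift g0 3 N
  exact ⟨j, hjN, by simpa [h0] using hj 0 (by norm_num),
    by simpa [h1] using hj 1 (by norm_num), by simpa [h2] using hj 2 (by norm_num)⟩

/-- Base case n = 3 of the non-uniqueness induction. -/
lemma base3 (i o Λ : ℕ) (hoΛ : o + 3 ≤ Λ) (hΛ : 4 < Λ) :
    ∃ p1 p2 : ℕ, (∀ s < 3, tm (p1 + (o + s)) = tm (i + s)) ∧
      (∀ s < 3, tm (p2 + (o + s)) = tm (i + s)) ∧
      ∃ d < Λ, tm (p1 + d) ≠ tm (p2 + d) := by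
  by_cases hxy : tm i = tm (i + 1)
  · -- case A : w = x x x̄, occurrences j = 2γ+3 for triples (⋆, x+1, x) at γ
    have hz : tm (i + 2) = tm (i + 1) + 1 := by
      refine f2_ne_iff _ _ (fun hEq => tm_no_triple i hxy hEq)
    have occA : ∀ γ, tm (γ + 1) = tm i + 1 → tm (γ + 2) = tm i →
        ∀ s < 3, tm (2 * γ + 3 + s) = tm (i + s) := by
      intro γ hB hC s hs
      interval_cases s
      · simp only [Nat.add_zero]; rw [show 2*γ+3 = 2*(γ+1)+1 from by ring, tm_odd, hB, f2_two]
      · rw [show 2*γ+3+1 = 2*(γ+2) from by ring, tm_even, hC, hxy]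
      · rw [show 2*γ+3+2 = 2*(γ+2)+1 from by ring, tm_odd, hC, hz, hxy]
    by_cases ho : 2 ≤ o
    · obtain ⟨γ1, hN1, hA1, hB1, hC1⟩ :=
        tm_triple 0 (tm i + 1) (tm i) (fun h => f2_succ_ne (tm i) h.2) o
      obtain ⟨γ2, hN2, hA2, hB2, hC2⟩ :=
        tm_triple 1 (tm i + 1) (tm i) (fun h => f2_succ_ne (tm i) h.2) o
      refine ⟨2*γ1+3 - o, 2*γ2+3 - o, ?_, ?_, ⟨o - 2, by omega, ?_⟩⟩
      · intro s hs
        rw [show 2*γ1+3 - o + (o + s) = 2*γ1+3+s from by omega]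
        exact occA γ1 hB1 hC1 s hs
      · intro s hs
        rw [show 2*γ2+3 - o + (o + s) = 2*γ2+3+s from by omega]
        exact occA γ2 hB2 hC2 s hs
      · rw [show 2*γ1+3 - o + (o-2) = 2*γ1+1 from by omega,
            show 2*γ2+3 - o + (o-2) = 2*γ2+1 from by omega, tm_odd, tm_odd, hA1, hA2]
        decide
    · -- o ≤ 1 : occurrences j = 2γ+1 for triples (x+1, x, ⋆) at γ
      have occA' : ∀ γ, tm γ = tm i + 1 → tm (γ + 1) = tm i →
          ∀ s < 3, tm (2 * γ + 1 + s) = tm (i + s) := by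
        intro γ hA hB s hs
        interval_cases s
        · simp only [Nat.add_zero]; rw [tm_odd, hA, f2_two]
        · rw [show 2*γ+1+1 = 2*(γ+1) from by ring, tm_even, hB, hxy]
        · rw [show 2*γ+1+2 = 2*(γ+1)+1 from by ring, tm_odd, hB, hz, hxy]
      obtain ⟨γ1, hN1, hA1, hB1, hC1⟩ :=
        tm_triple (tm i + 1) (tm i) 0 (fun h => f2_succ_ne (tm i) h.1) o
      obtain ⟨γ2, hN2, hA2, hB2, hC2⟩ :=
        tm_triple (tm i + 1) (tm i) 1 (fun h => f2_succ_ne (tm i) h.1) o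
      refine ⟨2*γ1+1 - o, 2*γ2+1 - o, ?_, ?_, ⟨o + 3, by omega, ?_⟩⟩
      · intro s hs
        rw [show 2*γ1+1 - o + (o + s) = 2*γ1+1+s from by omega]
        exact occA' γ1 hA1 hB1 s hs
      · intro s hs
        rw [show 2*γ2+1 - o + (o + s) = 2*γ2+1+s from by omega]
        exact occA' γ2 hA2 hB2 s hs
      · rw [show 2*γ1+1 - o + (o+3) = 2*(γ1+2) from by omega,
            show 2*γ2+1 - o + (o+3) = 2*(γ2+2) from by omega, tm_even, tm_even, hC1, hC2]
        decide
  · have hy : tm (i + 1) = tm i + 1 := f2_ne_iff _ _ hxy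
    by_cases hyz : tm (i + 1) = tm (i + 2)
    · -- case B : w = x x̄ x̄, occurrences j = 2g for pairs (x, x̄) at g
      have occB : ∀ g, tm g = tm i → tm (g + 1) = tm (i + 1) →
          ∀ s < 3, tm (2 * g + s) = tm (i + s) := by
        intro g hA hB s hs
        interval_cases s
        · simp only [Nat.add_zero]; rw [tm_even, hA]
        · rw [tm_odd, hA, hy]
        · rw [show 2*g+2 = 2*(g+1) from by ring, tm_even, hB, hyz]
      by_cases ho : 1 ≤ o
      · obtain ⟨γ1, hN1, hA1, hB1, hC1⟩ :=
          tm_triple 0 (tm i) (tm (i+1)) (fun h => hxy h.2) o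
        obtain ⟨γ2, hN2, hA2, hB2, hC2⟩ :=
          tm_triple 1 (tm i) (tm (i+1)) (fun h => hxy h.2) o
        refine ⟨2*(γ1+1) - o, 2*(γ2+1) - o, ?_, ?_, ⟨o - 1, by omega, ?_⟩⟩
        · intro s hs
          rw [show 2*(γ1+1) - o + (o + s) = 2*(γ1+1)+s from by omega]
          exact occB (γ1+1) hB1 hC1 s hs
        · intro s hs
          rw [show 2*(γ2+1) - o + (o + s) = 2*(γ2+1)+s from by omega]
          exact occB (γ2+1) hB2 hC2 s hs
        · rw [show 2*(γ1+1) - o + (o-1) = 2*γ1+1 from by omega,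
              show 2*(γ2+1) - o + (o-1) = 2*γ2+1 from by omega, tm_odd, tm_odd, hA1, hA2]
          decide
      · obtain ⟨γ1, hN1, hA1, hB1, hC1⟩ :=
          tm_triple (tm i) (tm (i+1)) 0 (fun h => hxy h.1) o
        obtain ⟨γ2, hN2, hA2, hB2, hC2⟩ :=
          tm_triple (tm i) (tm (i+1)) 1 (fun h => hxy h.1) o
        refine ⟨2*γ1 - o, 2*γ2 - o, ?_, ?_, ⟨o + 4, by omega, ?_⟩⟩
        · intro s hs
          rw [show 2*γ1 - o + (o + s) = 2*γ1+s from by omega]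
          exact occB γ1 hA1 hB1 s hs
        · intro s hs
          rw [show 2*γ2 - o + (o + s) = 2*γ2+s from by omega]
          exact occB γ2 hA2 hB2 s hs
        · rw [show 2*γ1 - o + (o+4) = 2*(γ1+2) from by omega,
              show 2*γ2 - o + (o+4) = 2*(γ2+2) from by omega, tm_even, tm_even, hC1, hC2]
          decide
    · -- case C : w alternating x x̄ x ; mix an even and an odd occurrence
      have hz : tm (i + 2) = tm i := by
        have := f2_ne_iff _ _ hyz
        rw [this, hy, f2_two]
      -- even occurrence j = 2(γ+1) for triple (x+1, x, x) at γ
      have occE : ∀ γ, tm (γ + 1) = tm i → tm (γ + 2) = tm i →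
          ∀ s < 3, tm (2 * (γ+1) + s) = tm (i + s) := by
        intro γ hB hC s hs
        interval_cases s
        · simp only [Nat.add_zero]; rw [tm_even, hB]
        · rw [tm_odd, hB, hy]
        · rw [show 2*(γ+1)+2 = 2*(γ+2) from by ring, tm_even, hC, hz]
      -- odd occurrence j = 2(γ'+1)+1 for triple (x, x+1, x+1) at γ'
      have occO : ∀ γ, tm (γ + 1) = tm i + 1 → tm (γ + 2) = tm i + 1 →
          ∀ s < 3, tm (2 * (γ+1) + 1 + s) = tm (i + s) := by
        intro γ hB hC s hs
        interval_cases s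
        · simp only [Nat.add_zero]; rw [tm_odd, hB, f2_two]
        · rw [show 2*(γ+1)+1+1 = 2*(γ+2) from by ring, tm_even, hC, hy]
        · rw [show 2*(γ+1)+1+2 = 2*(γ+2)+1 from by ring, tm_odd, hC, hz, f2_two]
      obtain ⟨γ1, hN1, hA1, hB1, hC1⟩ :=
        tm_triple (tm i + 1) (tm i) (tm i) (fun h => f2_succ_ne (tm i) h.1) o
      obtain ⟨γ2, hN2, hA2, hB2, hC2⟩ :=
        tm_triple (tm i) (tm i + 1) (tm i + 1) (fun h => f2_neq (tm i) h.1) o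
      by_cases ho : 1 ≤ o
      · refine ⟨2*(γ1+1) - o, 2*(γ2+1)+1 - o, ?_, ?_, ⟨o - 1, by omega, ?_⟩⟩
        · intro s hs
          rw [show 2*(γ1+1) - o + (o + s) = 2*(γ1+1)+s from by omega]
          exact occE γ1 hB1 hC1 s hs
        · intro s hs
          rw [show 2*(γ2+1)+1 - o + (o + s) = 2*(γ2+1)+1+s from by omega]
          exact occO γ2 hB2 hC2 s hs
        · rw [show 2*(γ1+1) - o + (o-1) = 2*γ1+1 from by omega,
              show 2*(γ2+1)+1 - o + (o-1) = 2*(γ2+1) from by omega, tm_odd, tm_even, hA1, hB2]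
          exact f2_succ_ne (tm i + 1)
      · refine ⟨2*(γ1+1) - o, 2*(γ2+1)+1 - o, ?_, ?_, ⟨o + 3, by omega, ?_⟩⟩
        · intro s hs
          rw [show 2*(γ1+1) - o + (o + s) = 2*(γ1+1)+s from by omega]
          exact occE γ1 hB1 hC1 s hs
        · intro s hs
          rw [show 2*(γ2+1)+1 - o + (o + s) = 2*(γ2+1)+1+s from by omega]
          exact occO γ2 hB2 hC2 s hs
        · have hnext : tm (γ2 + 3) = tm (γ2 + 2) + 1 := by
            have : tm (γ2+1) = tm (γ2+1+1) := by rw [hB2, show γ2+1+1 = γ2+2 from rfl, hC2]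
            have h' := tm_pair_next this
            rwa [show γ2+1+2 = γ2+3 from by ring, show γ2+1+1 = γ2+2 from by ring] at h'
          rw [show 2*(γ1+1) - o + (o+3) = 2*(γ1+2)+1 from by omega,
              show 2*(γ2+1)+1 - o + (o+3) = 2*(γ2+3) from by omega, tm_odd, tm_even,
              hC1, hnext, hC2, f2_two]
          exact f2_succ_ne (tm i)

/-- Base case n = 4, occurrence at an even position. -/
lemma base4 (i o Λ : ℕ) (hi : i % 2 = 0) (hoΛ : o + 4 ≤ Λ) (hΛ : 8 < Λ) :
    ∃ p1 p2 : ℕ, (∀ s < 4, tm (p1 + (o + s)) = tm (i + s)) ∧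
      (∀ s < 4, tm (p2 + (o + s)) = tm (i + s)) ∧
      ∃ d < Λ, tm (p1 + d) ≠ tm (p2 + d) := by
  obtain ⟨f, rfl⟩ : ∃ f, i = 2 * f := ⟨i / 2, by omega⟩
  have e0 : tm (2 * f) = tm f := tm_even f
  have e1 : tm (2 * f + 1) = tm f + 1 := tm_odd f
  have e2 : tm (2 * f + 2) = tm (f + 1) := by
    rw [show 2*f+2 = 2*(f+1) from by ring, tm_even]
  have e3 : tm (2 * f + 3) = tm (f + 1) + 1 := by
    rw [show 2*f+3 = 2*(f+1)+1 from by ring, tm_odd]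
  by_cases hab : tm f = tm (f + 1)
  · -- rigid case: occurrences j = 4h+2 for pairs (tm f + 1, tm f) at h
    have occR : ∀ h, tm h = tm f + 1 → tm (h + 1) = tm f →
        ∀ s < 4, tm (4 * h + 2 + s) = tm (2 * f + s) := by
      intro h hA hB s hs
      interval_cases s
      · simp only [Nat.add_zero]
        rw [show 4*h+2 = 2*(2*h+1) from by ring, tm_even, tm_odd, hA, f2_two, e0]
      · rw [show 4*h+2+1 = 2*(2*h+1)+1 from by ring, tm_odd, tm_odd, hA, f2_two, e1]
      · rw [show 4*h+2+2 = 2*(2*(h+1)) from by ring, tm_even, tm_even, hB, e2, ← hab]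
      · rw [show 4*h+2+3 = 2*(2*(h+1))+1 from by ring, tm_odd, tm_even, hB, e3, ← hab]
    by_cases ho : 3 ≤ o
    · obtain ⟨γ1, hN1, hA1, hB1, hC1⟩ :=
        tm_triple 0 (tm f + 1) (tm f) (fun h => f2_succ_ne (tm f) h.2) o
      obtain ⟨γ2, hN2, hA2, hB2, hC2⟩ :=
        tm_triple 1 (tm f + 1) (tm f) (fun h => f2_succ_ne (tm f) h.2) o
      refine ⟨4*(γ1+1)+2 - o, 4*(γ2+1)+2 - o, ?_, ?_, ⟨o - 3, by omega, ?_⟩⟩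
      · intro s hs
        rw [show 4*(γ1+1)+2 - o + (o + s) = 4*(γ1+1)+2+s from by omega]
        exact occR (γ1+1) hB1 hC1 s hs
      · intro s hs
        rw [show 4*(γ2+1)+2 - o + (o + s) = 4*(γ2+1)+2+s from by omega]
        exact occR (γ2+1) hB2 hC2 s hs
      · rw [show 4*(γ1+1)+2 - o + (o-3) = 2*(2*γ1+1)+1 from by omega,
            show 4*(γ2+1)+2 - o + (o-3) = 2*(2*γ2+1)+1 from by omega,
            tm_odd, tm_odd, tm_odd, tm_odd, hA1, hA2]
        decide
    · obtain ⟨γ1, hN1, hA1, hB1, hC1⟩ :=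
        tm_triple (tm f + 1) (tm f) 0 (fun h => f2_succ_ne (tm f) h.1) o
      obtain ⟨γ2, hN2, hA2, hB2, hC2⟩ :=
        tm_triple (tm f + 1) (tm f) 1 (fun h => f2_succ_ne (tm f) h.1) o
      refine ⟨4*γ1+2 - o, 4*γ2+2 - o, ?_, ?_, ⟨o + 6, by omega, ?_⟩⟩
      · intro s hs
        rw [show 4*γ1+2 - o + (o + s) = 4*γ1+2+s from by omega]
        exact occR γ1 hA1 hB1 s hs
      · intro s hs
        rw [show 4*γ2+2 - o + (o + s) = 4*γ2+2+s from by omega]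
        exact occR γ2 hA2 hB2 s hs
      · rw [show 4*γ1+2 - o + (o+6) = 2*(2*(γ1+2)) from by omega,
            show 4*γ2+2 - o + (o+6) = 2*(2*(γ2+2)) from by omega,
            tm_even, tm_even, tm_even, tm_even, hC1, hC2]
        decide
  · -- distinct case: occurrences j = 2g for pairs (tm f, tm (f+1)) at g
    have occD : ∀ g, tm g = tm f → tm (g + 1) = tm (f + 1) →
        ∀ s < 4, tm (2 * g + s) = tm (2 * f + s) := by
      intro g hA hB s hs
      interval_cases s
      · simp only [Nat.add_zero]; rw [tm_even, hA, e0]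
      · rw [tm_odd, hA, e1]
      · rw [show 2*g+2 = 2*(g+1) from by ring, tm_even, hB, e2]
      · rw [show 2*g+3 = 2*(g+1)+1 from by ring, tm_odd, hB, e3]
    by_cases ho : 1 ≤ o
    · obtain ⟨γ1, hN1, hA1, hB1, hC1⟩ :=
        tm_triple 0 (tm f) (tm (f+1)) (fun h => hab h.2) o
      obtain ⟨γ2, hN2, hA2, hB2, hC2⟩ :=
        tm_triple 1 (tm f) (tm (f+1)) (fun h => hab h.2) o
      refine ⟨2*(γ1+1) - o, 2*(γ2+1) - o, ?_, ?_, ⟨o - 1, by omega, ?_⟩⟩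
      · intro s hs
        rw [show 2*(γ1+1) - o + (o + s) = 2*(γ1+1)+s from by omega]
        exact occD (γ1+1) hB1 hC1 s hs
      · intro s hs
        rw [show 2*(γ2+1) - o + (o + s) = 2*(γ2+1)+s from by omega]
        exact occD (γ2+1) hB2 hC2 s hs
      · rw [show 2*(γ1+1) - o + (o-1) = 2*γ1+1 from by omega,
            show 2*(γ2+1) - o + (o-1) = 2*γ2+1 from by omega, tm_odd, tm_odd, hA1, hA2]
        decide
    · obtain ⟨γ1, hN1, hA1, hB1, hC1⟩ :=
        tm_triple (tm f) (tm (f+1)) 0 (fun h => hab h.1) o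
      obtain ⟨γ2, hN2, hA2, hB2, hC2⟩ :=
        tm_triple (tm f) (tm (f+1)) 1 (fun h => hab h.1) o
      refine ⟨2*γ1 - o, 2*γ2 - o, ?_, ?_, ⟨o + 4, by omega, ?_⟩⟩
      · intro s hs
        rw [show 2*γ1 - o + (o + s) = 2*γ1+s from by omega]
        exact occD γ1 hA1 hB1 s hs
      · intro s hs
        rw [show 2*γ2 - o + (o + s) = 2*γ2+s from by omega]
        exact occD γ2 hA2 hB2 s hs
      · rw [show 2*γ1 - o + (o+4) = 2*(γ1+2) from by omega,
            show 2*γ2 - o + (o+4) = 2*(γ2+2) from by omega, tm_even, tm_even, hC1, hC2]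
        decide

/-- Main lemma for part (i): a factor of length n cannot uniquely determine a
window of length `> 2^(log₂(n-2)+2)` around it. -/
lemma keyC : ∀ n, 3 ≤ n → ∀ i o Λ : ℕ, o + n ≤ Λ → 2 ^ (Nat.log 2 (n - 2) + 2) < Λ →
    ∃ p1 p2 : ℕ, (∀ s < n, tm (p1 + (o + s)) = tm (i + s)) ∧
      (∀ s < n, tm (p2 + (o + s)) = tm (i + s)) ∧
      ∃ d < Λ, tm (p1 + d) ≠ tm (p2 + d) := by
  intro n
  induction n using Nat.strong_induction_on with
  | _ n IH =>
  intro h3 i o Λ hoΛ hΛ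
  rcases eq_or_lt_of_le h3 with h3' | h4
  · -- n = 3
    subst h3'
    have hb : (4:ℕ) < Λ := by simpa [Nat.log_one_right] using hΛ
    exact base3 i o Λ hoΛ hb
  · by_cases hsp : n = 4 ∧ i % 2 = 0
    · obtain ⟨rfl, hi⟩ := hsp
      have hl : Nat.log 2 2 = 1 := by
        simpa using Nat.log_pow (b := 2) (by norm_num) 1
      have hb : (8:ℕ) < Λ := by
        rw [show (4:ℕ) - 2 = 2 from rfl, hl] at hΛ
        simpa using hΛ
      exact base4 i o Λ hi hoΛ hb
    · -- recursion
      set δ := i % 2 with hδ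
      set n'' := (n + 1 + δ) / 2 with hn''
      set i'' := i / 2 with hi''
      set o'' := (o + 1 - δ) / 2 with ho''
      set Λ'' := max ((Λ + 1) / 2) (o'' + n'') with hΛ''def
      have hδ1 : δ ≤ 1 := by omega
      have hrec : 3 ≤ n'' := by omega
      have hlt : n'' < n := by omega
      -- numeric bound for the recursive call
      have hlog : 2 ^ (Nat.log 2 (n'' - 2) + 2) ≤ 2 ^ (Nat.log 2 (n - 2) + 1) := by
        have h1 : n'' - 2 ≠ 0 := by omega
        have h2 : 2 ^ Nat.log 2 (n'' - 2) ≤ n'' - 2 := Nat.pow_log_le_self 2 h1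
        have h3' : n - 2 < 2 ^ (Nat.log 2 (n - 2) + 1) := Nat.lt_pow_succ_log_self (by norm_num) _
        have h4' : 2 * (n'' - 2) ≤ n - 2 := by omega
        have h5 : 2 ^ (Nat.log 2 (n'' - 2) + 1) < 2 ^ (Nat.log 2 (n - 2) + 1) := by
          calc 2 ^ (Nat.log 2 (n'' - 2) + 1) = 2 * 2 ^ Nat.log 2 (n'' - 2) := by ring
          _ ≤ 2 * (n'' - 2) := by omega
          _ ≤ n - 2 := h4'
          _ < 2 ^ (Nat.log 2 (n - 2) + 1) := h3'
        have h6 : Nat.log 2 (n'' - 2) + 1 < Nat.log 2 (n - 2) + 1 :=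
          (Nat.pow_lt_pow_iff_right (by norm_num)).mp h5
        exact Nat.pow_le_pow_right (by norm_num) (by omega)
      have hb'' : 2 ^ (Nat.log 2 (n'' - 2) + 2) < Λ'' := by
        have h2X : 2 ^ (Nat.log 2 (n - 2) + 2) = 2 * 2 ^ (Nat.log 2 (n - 2) + 1) := by ring
        have : 2 ^ (Nat.log 2 (n'' - 2) + 2) < (Λ + 1) / 2 := by omega
        exact lt_of_lt_of_le this (le_max_left _ _)
      obtain ⟨p1'', p2'', H1, H2, d'', hd'', hne⟩ :=
        IH n'' hlt hrec i'' o'' Λ'' (le_max_right _ _) hb''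
      by_cases hin : o'' ≤ d'' ∧ d'' < o'' + n''
      · exfalso
        apply hne
        have e1 := H1 (d'' - o'') (by omega)
        have e2 := H2 (d'' - o'') (by omega)
        rw [show o'' + (d'' - o'') = d'' from by omega] at e1 e2
        rw [e1, e2]
      · have he0 : o ≤ 2 * o'' + δ := by omega
        have he1 : 2 * o'' + δ ≤ o + 1 := by omega
        have hifix : i = 2 * i'' + δ := by omega
        have hdown : ∀ (p'' : ℕ), (∀ u < n'', tm (p1'' + (o'' + u)) = tm (i'' + u)) → True := fun _ _ => trivial
        have occ : ∀ p'' : ℕ, (∀ u < n'', tm (p'' + (o'' + u)) = tm (i'' + u)) →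
            ∀ s < n, tm (2 * (p'' + o'') + δ - o + (o + s)) = tm (i + s) := by
          intro p'' H s hs
          have H' : ∀ u < n'', tm (p'' + o'' + u) = tm (i'' + u) := by
            intro u hu; rw [add_assoc]; exact H u hu
          have hD := down_eq H' (δ + s) (by omega)
          rw [show 2 * (p'' + o'') + δ - o + (o + s) = 2 * (p'' + o'') + (δ + s) from by omega]
          rw [hD, show 2 * i'' + (δ + s) = i + s from by omega]
        have hd2 : 2 * d'' < Λ := by
          rcases lt_max_iff.mp hd'' with h | h
          · omega
          · omega
        refine ⟨2 * (p1'' + o'') + δ - o, 2 * (p2'' + o'') + δ - o,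
          occ p1'' H1, occ p2'' H2, ⟨2 * d'', hd2, ?_⟩⟩
        have hE : 2 * o'' + δ - o = 0 ∨ 2 * o'' + δ - o = 1 := by omega
        rcases hE with hE | hE
        · rw [show 2 * (p1'' + o'') + δ - o + 2 * d'' = 2 * (p1'' + d'') from by omega,
              show 2 * (p2'' + o'') + δ - o + 2 * d'' = 2 * (p2'' + d'') from by omega,
              tm_even, tm_even]
          exact hne
        · rw [show 2 * (p1'' + o'') + δ - o + 2 * d'' = 2 * (p1'' + d'') + 1 from by omega,
              show 2 * (p2'' + o'') + δ - o + 2 * d'' = 2 * (p2'' + d'') + 1 from by omega,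
              tm_odd, tm_odd]
          exact f2_add_ne _ _ hne

/-- Left offset of the sharp uniquely-extendable factor of length n. -/
def Aof : ℕ → ℕ
  | n => if n ≤ 3 then 1 else 2 * Aof (n / 2 + 1) + 1
  decreasing_by omega

lemma Aof_eq (n : ℕ) : Aof n = if n ≤ 3 then 1 else 2 * Aof (n / 2 + 1) + 1 := by
  rw [Aof]

lemma Aof_three : Aof 3 = 1 := by rw [Aof_eq]; norm_num

lemma Aof_of_ge (n : ℕ) (h : 4 ≤ n) : Aof n = 2 * Aof (n / 2 + 1) + 1 := by
  rw [Aof_eq, if_neg (by omega)]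

lemma Aof_odd (n : ℕ) : Aof n % 2 = 1 := by
  rw [Aof_eq]; split <;> omega

/-- The exact halving of the log. -/
lemma loghalf (n : ℕ) (h : 4 ≤ n) :
    Nat.log 2 (n / 2 + 1 - 2) + 1 = Nat.log 2 (n - 2) := by
  have h1 : (n - 2) / 2 = n / 2 + 1 - 2 := by omega
  have h2 : Nat.log 2 ((n - 2) / 2) = Nat.log 2 (n - 2) - 1 := Nat.log_div_base _ _
  rw [h1] at h2
  have h3 : 0 < Nat.log 2 (n - 2) := Nat.log_pos (by norm_num) (by omega)
  omega

lemma Aof_bound : ∀ n, 3 ≤ n → Aof n + n ≤ 2 ^ (Nat.log 2 (n - 2) + 2) := by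
  intro n
  induction n using Nat.strong_induction_on with
  | _ n IH =>
  intro h3
  rcases eq_or_lt_of_le h3 with h3' | h4
  · subst h3'
    simp [Aof_three, Nat.log_one_right]
  · have hA := Aof_of_ge n (by omega)
    have hIH := IH (n / 2 + 1) (by omega) (by omega)
    rw [← loghalf n (by omega)] at *
    have hpow : 2 ^ (Nat.log 2 (n / 2 + 1 - 2) + 1 + 2)
        = 2 * 2 ^ (Nat.log 2 (n / 2 + 1 - 2) + 2) := by ring
    omega

/-- Rigidity: every occurrence of the word t[Aof n .. Aof n + n) forces the
whole aligned window of length 2^(log₂(n-2)+2). -/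
lemma keyD : ∀ n, 3 ≤ n → ∀ p : ℕ, (∀ s < n, tm (p + (Aof n + s)) = tm (Aof n + s)) →
    ∀ x < 2 ^ (Nat.log 2 (n - 2) + 2), tm (p + x) = tm x := by
  intro n
  induction n using Nat.strong_induction_on with
  | _ n IH =>
  intro h3 p h x hx
  rcases eq_or_lt_of_le h3 with h3' | h4
  · -- base n = 3, Aof 3 = 1
    subst h3'
    rw [Aof_three] at h
    have h0 := h 0 (by norm_num)
    have h1 := h 1 (by norm_num)
    have h2 := h 2 (by norm_num)
    simp only [Nat.add_zero] at h0
    rw [tm1] at h0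
    rw [show (1:ℕ)+1 = 2 from rfl, tm2] at h1
    rw [show (1:ℕ)+2 = 3 from rfl, tm3] at h2
    -- p even
    have hadj : tm (p + 1) = tm (p + 1 + 1) := by
      rw [show p+1+1 = p+2 from rfl, h0, h1]
    have hp2 : (p + 1) % 2 = 1 := tm_adj hadj
    obtain ⟨g, rfl⟩ : ∃ g, p = 2 * g := ⟨p / 2, by omega⟩
    have hg0 : tm g = 0 := by
      have := tm_odd g
      rw [h0] at this
      -- this : 1 = tm g + 1
      have := f2_cancel 0 (tm g) (by rw [← this]; rfl)
      exact this.symm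
    rw [Nat.log_one_right] at hx
    norm_num at hx
    interval_cases x
    · simpa [tm_zero, hg0] using tm_even g
    · rw [h0, tm1]
    · rw [h1, tm2]
    · rw [h2, tm3]
  · -- recursive step
    have hA := Aof_of_ge n (by omega)
    set a'' := Aof (n / 2 + 1) with ha''
    -- occurrences have the parity of Aof n, hence p is even
    have hpar : (p + Aof n) % 2 = Aof n % 2 := by
      apply parity4
      intro s hs
      have := h s (by omega)
      rw [show p + Aof n + s = p + (Aof n + s) from by omega]
      exact this
    have hae : Aof n % 2 = 1 := Aof_odd n
    obtain ⟨p', rfl⟩ : ∃ q, p = 2 * q := ⟨p / 2, by omega⟩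
    -- transfer upstairs
    have hup := up_eq (x := 2 * p' + Aof n) (y := Aof n) (n := n) (by omega)
      (by omega) (by
        intro s hs
        rw [show 2 * p' + Aof n + s = 2 * p' + (Aof n + s) from by omega]
        exact h s hs)
    have hx2 : (2 * p' + Aof n) % 2 = 1 := by omega
    rw [hx2] at hup
    have hdiv1 : (2 * p' + Aof n) / 2 = p' + a'' := by omega
    have hdiv2 : Aof n / 2 = a'' := by omega
    have hcnt : (n + 1 + 1) / 2 = n / 2 + 1 := by omega
    rw [hdiv1, hdiv2, hcnt] at hup
    -- apply IH at n/2+1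
    have hIH := IH (n / 2 + 1) (by omega) (by omega) p' (by
      intro u hu
      rw [show p' + (Aof (n/2+1) + u) = p' + a'' + u from by rw [ha'']; ring]
      exact hup u hu)
    rw [← loghalf n (by omega)] at hx
    have hxx : x < 2 * 2 ^ (Nat.log 2 (n / 2 + 1 - 2) + 2) := by
      have : 2 ^ (Nat.log 2 (n / 2 + 1 - 2) + 1 + 2)
          = 2 * 2 ^ (Nat.log 2 (n / 2 + 1 - 2) + 2) := by ring
      omega
    rcases Nat.even_or_odd x with hxe | hxe
    · have hx0 : x % 2 = 0 := Nat.even_iff.mp hxe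
      obtain ⟨v, rfl⟩ : ∃ v, x = 2 * v := ⟨x / 2, by omega⟩
      rw [show 2 * p' + 2 * v = 2 * (p' + v) from by ring, tm_even, tm_even]
      exact hIH v (by omega)
    · have hx0 : x % 2 = 1 := Nat.odd_iff.mp hxe
      obtain ⟨v, rfl⟩ : ∃ v, x = 2 * v + 1 := ⟨x / 2, by omega⟩
      rw [show 2 * p' + (2 * v + 1) = 2 * (p' + v) + 1 from by ring, tm_odd, tm_odd]
      rw [hIH v (by omega)]


lemma tmWord_length (i n : ℕ) : (tmWord i n).length = n := by simp [tmWord]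

lemma tmWord_congr {i j n : ℕ} (h : ∀ s < n, tm (i + s) = tm (j + s)) :
    tmWord i n = tmWord j n := by
  apply List.ext_getElem (by simp [tmWord])
  intro s h1 h2
  simp only [tmWord, List.getElem_map, List.getElem_range]
  exact h s (by simpa [tmWord] using h1)

lemma tmWord_eq_imp {i j n : ℕ} (h : tmWord i n = tmWord j n) :
    ∀ s < n, tm (i + s) = tm (j + s) := by
  intro s hs
  have h1 : (tmWord i n)[s]'(by simp [tmWord]; omega) = (tmWord j n)[s]'(by simp [tmWord]; omega) :=
    List.getElem_of_eq h _
  simpa [tmWord] using h1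

lemma tmWord_append (i m k : ℕ) : tmWord i m ++ tmWord (i + m) k = tmWord i (m + k) := by
  rw [tmWord, tmWord, tmWord, List.range_add, List.map_append, List.map_map]
  congr 1
  simp [Function.comp, add_assoc]

lemma tmWord_three (p l1 n2 l2 : ℕ) :
    tmWord p l1 ++ tmWord (p + l1) n2 ++ tmWord (p + l1 + n2) l2 = tmWord p (l1 + n2 + l2) := by
  rw [tmWord_append p l1 n2, show p + l1 + n2 = p + (l1 + n2) from by ring,
    tmWord_append p (l1 + n2) l2]

theorem thueMorse_unique_extension_upper_bound (n : ℕ) (hn : 4 ≤ n) :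
    (∀ w : List (Fin 2), w.length = n → IsFactor w →
      ∀ l₁ l₂ : ℕ, 2 ^ (Nat.log 2 (n - 2) + 2) - n < l₁ + l₂ →
        ∃ vv yy : List (Fin 2) × List (Fin 2), vv ≠ yy ∧
          vv.1.length = l₁ ∧ vv.2.length = l₂ ∧
          yy.1.length = l₁ ∧ yy.2.length = l₂ ∧
          IsFactor (vv.1 ++ w ++ vv.2) ∧ IsFactor (yy.1 ++ w ++ yy.2)) ∧
    (∃ w : List (Fin 2), w.length = n ∧ IsFactor w ∧
      ∃ l₁ l₂ : ℕ, l₁ + l₂ = 2 ^ (Nat.log 2 (n - 2) + 2) - n ∧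
        ∃! vv : List (Fin 2) × List (Fin 2),
          vv.1.length = l₁ ∧ vv.2.length = l₂ ∧ IsFactor (vv.1 ++ w ++ vv.2)) := by
  have hnle : n ≤ 2 ^ (Nat.log 2 (n - 2) + 2) := by
    have h1 := Nat.lt_pow_succ_log_self (b := 2) (by norm_num) (n - 2)
    have hp : 2 ^ (Nat.log 2 (n - 2) + 2) = 2 * 2 ^ (Nat.log 2 (n - 2) + 1) := by ring
    have h2 : (2:ℕ) ^ 1 ≤ 2 ^ (Nat.log 2 (n - 2) + 1) := Nat.pow_le_pow_right (by norm_num) (by omega)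
    simp at h2
    omega
  constructor
  · -- part (i)
    intro w hwlen hwf l₁ l₂ hll
    obtain ⟨i, hi⟩ := hwf
    rw [hwlen] at hi
    have hΛ : 2 ^ (Nat.log 2 (n - 2) + 2) < l₁ + n + l₂ := by omega
    obtain ⟨p1, p2, H1, H2, d, hd, hne⟩ :=
      keyC n (by omega) i l₁ (l₁ + n + l₂) (by omega) hΛ
    have hw1 : w = tmWord (p1 + l₁) n := by
      rw [hi]
      refine tmWord_congr (fun s hs => ?_)
      have := H1 s hs
      rw [show p1 + (l₁ + s) = p1 + l₁ + s from by omega] at this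
      exact this.symm
    have hw2 : w = tmWord (p2 + l₁) n := by
      rw [hi]
      refine tmWord_congr (fun s hs => ?_)
      have := H2 s hs
      rw [show p2 + (l₁ + s) = p2 + l₁ + s from by omega] at this
      exact this.symm
    have hfull1 : tmWord p1 l₁ ++ w ++ tmWord (p1 + l₁ + n) l₂ = tmWord p1 (l₁ + n + l₂) := by
      rw [hw1]; exact tmWord_three p1 l₁ n l₂
    have hfull2 : tmWord p2 l₁ ++ w ++ tmWord (p2 + l₁ + n) l₂ = tmWord p2 (l₁ + n + l₂) := by
      rw [hw2]; exact tmWord_three p2 l₁ n l₂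
    refine ⟨(tmWord p1 l₁, tmWord (p1 + l₁ + n) l₂), (tmWord p2 l₁, tmWord (p2 + l₁ + n) l₂),
      ?_, tmWord_length _ _, tmWord_length _ _, tmWord_length _ _, tmWord_length _ _, ?_, ?_⟩
    · -- vv ≠ yy
      intro hEq
      have hfst := congrArg Prod.fst hEq
      have hsnd := congrArg Prod.snd hEq
      simp only at hfst hsnd
      have hwords : tmWord p1 (l₁ + n + l₂) = tmWord p2 (l₁ + n + l₂) := by
        rw [← hfull1, ← hfull2, hfst, hsnd]
      exact hne (tmWord_eq_imp hwords d hd)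
    · refine ⟨p1, ?_⟩
      have hlen : (tmWord p1 l₁ ++ w ++ tmWord (p1 + l₁ + n) l₂).length = l₁ + n + l₂ := by
        simp only [List.length_append, tmWord_length, hwlen]
      rw [hlen]
      exact hfull1
    · refine ⟨p2, ?_⟩
      have hlen : (tmWord p2 l₁ ++ w ++ tmWord (p2 + l₁ + n) l₂).length = l₁ + n + l₂ := by
        simp only [List.length_append, tmWord_length, hwlen]
      rw [hlen]
      exact hfull2
  · -- part (ii)
    have hbound := Aof_bound n (by omega)
    set M := 2 ^ (Nat.log 2 (n - 2) + 2) with hM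
    set a := Aof n with ha
    set l2 := M - n - a with hl2
    have haM : a + n + l2 = M := by omega
    refine ⟨tmWord a n, tmWord_length _ _, ⟨a, by rw [tmWord_length]⟩, a, l2, by omega, ?_⟩
    refine ⟨(tmWord 0 a, tmWord (a + n) l2), ⟨tmWord_length _ _, tmWord_length _ _, ?_⟩, ?_⟩
    · -- existence
      refine ⟨0, ?_⟩
      have h3 : tmWord 0 a ++ tmWord a n ++ tmWord (a + n) l2 = tmWord 0 (a + n + l2) := by
        have := tmWord_three 0 a n l2
        simpa using this
      have hlen : (tmWord 0 a ++ tmWord a n ++ tmWord (a + n) l2).length = a + n + l2 := by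
        simp only [List.length_append, tmWord_length]
      rw [hlen]
      exact h3
    · -- uniqueness
      rintro ⟨v1, v2⟩ ⟨hv1, hv2, q, hq⟩
      simp only at hv1 hv2 hq ⊢
      have hlen : (v1 ++ tmWord a n ++ v2).length = a + (n + l2) := by
        simp only [List.length_append, tmWord_length, hv1, hv2]; omega
      rw [hlen] at hq
      have hsplit : tmWord q (a + (n + l2)) =
          tmWord q a ++ (tmWord (q + a) n ++ tmWord (q + a + n) l2) := by
        rw [tmWord_append (q + a) n l2, tmWord_append q a (n + l2)]
      rw [hsplit] at hq
      rw [List.append_assoc] at hq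
      obtain ⟨hqv1, hqrest⟩ := List.append_inj hq (by rw [hv1, tmWord_length])
      obtain ⟨hqw, hqv2⟩ := List.append_inj hqrest (by rw [tmWord_length, tmWord_length])
      -- rigidity
      have hocc : ∀ s < n, tm (q + (a + s)) = tm (a + s) := by
        intro s hs
        have := tmWord_eq_imp hqw s hs
        rw [show q + a + s = q + (a + s) from by omega] at this
        exact this.symm
      have hD := keyD n (by omega) q hocc
      have hv1' : v1 = tmWord 0 a := by
        rw [hqv1]
        refine tmWord_congr (fun s hs => ?_)
        rw [Nat.zero_add]
        exact hD s (by omega)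
      have hv2' : v2 = tmWord (a + n) l2 := by
        rw [hqv2]
        refine tmWord_congr (fun s hs => ?_)
        rw [show q + a + n + s = q + (a + n + s) from by omega]
        exact hD (a + n + s) (by omega)
      rw [hv1', hv2']
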